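/- arXiv:2603.15961 — 9 statements merged into one kernel-verified Lean document; each statement's English description precedes it below -/
import Mathlib

section
/- Let τ: ℝ → ℝ be continuously differentiable with τ'(t) < 1 for all t, and suppose there exist constants 0 < τ_min ≤ τ_max such that τ_min ≤ τ(t) ≤ τ_max for all t ∈ ℝ. For every τ* > 0 there exists a strictly increasing, continuously differentiable function h: [−τ*, ∞) → ℝ such that h(0) = 0 and h(λ) − τ(h(λ)) = h(λ − τ*) for all λ ≥ 0. -/
open Set

/-- Piecewise construction of the time transformation: `φ` on `[-τs, 0]`,
extended step by step using `G`, the inverse of `F t = t - τ t`. -/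
noncomputable def timeH (G φ : ℝ → ℝ) (τs : ℝ) : ℕ → ℝ → ℝ
  | 0 => φ
  | n + 1 => fun l => if l ≤ (n : ℝ) * τs then timeH G φ τs n l
      else G (timeH G φ τs n (l - τs))

/-- The corresponding derivative function. -/
noncomputable def timeHd (τ G φd : ℝ → ℝ) (H : ℕ → ℝ → ℝ) (τs : ℝ) : ℕ → ℝ → ℝ
  | 0 => φd
  | n + 1 => fun l => if l ≤ (n : ℝ) * τs then timeHd τ G φd H τs n l
      else timeHd τ G φd H τs n (l - τs) * (1 - deriv τ (G (H n (l - τs))))⁻¹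

/-- Main inductive invariant for the piecewise construction. -/
lemma timeH_invariant
    (τ G φ φd : ℝ → ℝ) (τs : ℝ) (hτs : 0 < τs)
    (hτdc : Continuous (deriv τ))
    (hτd1 : ∀ t, deriv τ t < 1)
    (hGc : Continuous G)
    (hG' : ∀ x, HasDerivAt G ((1 - deriv τ (G x))⁻¹) x)
    (hGF : ∀ x, G (x - τ x) = x)
    (hFG : ∀ x, G x - τ (G x) = x)
    (hφ' : ∀ l, HasDerivAt φ (φd l) l)
    (hφdc : Continuous φd)
    (hφdpos : ∀ l ∈ Icc (-τs) 0, 0 < φd l)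
    (hbd : φ 0 - τ (φ 0) = φ (-τs))
    (hbe : φd 0 = φd (-τs) * (1 - deriv τ (φ 0))⁻¹)
    (H Hd : ℕ → ℝ → ℝ)
    (hH0 : ∀ l, H 0 l = φ l)
    (hHS : ∀ n l, H (n + 1) l = if l ≤ (n : ℝ) * τs then H n l else G (H n (l - τs)))
    (hHd0 : ∀ l, Hd 0 l = φd l)
    (hHdS : ∀ n l, Hd (n + 1) l = if l ≤ (n : ℝ) * τs then Hd n l
        else Hd n (l - τs) * (1 - deriv τ (G (H n (l - τs))))⁻¹) :
    ∀ n : ℕ,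
      (∀ l ∈ Icc (-τs) ((n : ℝ) * τs),
        HasDerivWithinAt (H n) (Hd n l) (Icc (-τs) ((n : ℝ) * τs)) l)
      ∧ (∀ l ∈ Icc (-τs) ((n : ℝ) * τs), 0 < Hd n l)
      ∧ ContinuousOn (Hd n) (Icc (-τs) ((n : ℝ) * τs))
      ∧ (∀ l ∈ Icc (0 : ℝ) ((n : ℝ) * τs), H n l - τ (H n l) = H n (l - τs))
      ∧ (∀ l ∈ Icc (0 : ℝ) ((n : ℝ) * τs),
          Hd n l = Hd n (l - τs) * (1 - deriv τ (H n l))⁻¹) := by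
  have eH0 : H 0 = φ := funext hH0
  have eHd0 : Hd 0 = φd := funext hHd0
  intro n
  induction n with
  | zero =>
    rw [eH0, eHd0]
    simp only [Nat.cast_zero, zero_mul]
    refine ⟨fun l _ => (hφ' l).hasDerivWithinAt, hφdpos, hφdc.continuousOn, ?_, ?_⟩
    · intro l hl
      have : l = 0 := le_antisymm hl.2 hl.1
      subst this
      rw [zero_sub]; exact hbd
    · intro l hl
      have : l = 0 := le_antisymm hl.2 hl.1
      subst this
      rw [zero_sub]; exact hbe
  | succ n ih =>
    obtain ⟨ia, ipos, icont, id_, ie⟩ := ih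
    rw [show ((n + 1 : ℕ) : ℝ) * τs = (n : ℝ) * τs + τs by push_cast; ring]
    set b := (n : ℝ) * τs with hb
    have hb0 : 0 ≤ b := by positivity
    have hbτ : -τs ≤ b := by linarith
    have hshift : ∀ l ∈ Icc (0 : ℝ) (b + τs), l - τs ∈ Icc (-τs) b := fun l hl =>
      ⟨by linarith [hl.1], by linarith [hl.2]⟩
    have hagree : ∀ l ∈ Icc (-τs) b, H (n + 1) l = H n l := fun l hl => by
      rw [hHS]; exact if_pos hl.2
    have hdagree : ∀ l, l ≤ b → Hd (n + 1) l = Hd n l := fun l hl => by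
      rw [hHdS]; exact if_pos hl
    have hHcont : ContinuousOn (H n) (Icc (-τs) b) := fun l hl => (ia l hl).continuousWithinAt
    have hvb : ∀ l, 0 ≤ l → l ≤ b → H n l = G (H n (l - τs)) := by
      intro l h0 h1
      have h2 := id_ l ⟨h0, h1⟩
      rw [← h2, hGF]
    have hdb : ∀ l, 0 ≤ l → l ≤ b →
        Hd n l = Hd n (l - τs) * (1 - deriv τ (G (H n (l - τs))))⁻¹ := by
      intro l h0 h1
      rw [← hvb l h0 h1]; exact ie l ⟨h0, h1⟩
    have hne : ∀ x : ℝ, 1 - deriv τ x ≠ 0 := fun x => by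
      have := hτd1 x; intro hcon; nlinarith
    -- the new piece and its derivative on `S = Icc 0 (b + τs)`
    have hψ : ∀ l₀ ∈ Icc (0 : ℝ) (b + τs), HasDerivWithinAt (fun l => G (H n (l - τs)))
        ((1 - deriv τ (G (H n (l₀ - τs))))⁻¹ * Hd n (l₀ - τs)) (Icc (0 : ℝ) (b + τs)) l₀ := by
      intro l₀ hl₀
      have hIn : HasDerivWithinAt (fun l : ℝ => l - τs) 1 (Icc (0 : ℝ) (b + τs)) l₀ :=
        ((hasDerivAt_id l₀).sub_const τs).hasDerivWithinAt
      have hinner := HasDerivWithinAt.comp l₀ (ia (l₀ - τs) (hshift l₀ hl₀)) hIn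
        (fun l hl => hshift l hl)
      have houter := (hG' (H n (l₀ - τs))).comp_hasDerivWithinAt l₀ hinner
      simpa [Function.comp_def, mul_one] using houter
    have hpos' : ∀ l ∈ Icc (-τs) (b + τs), 0 < Hd (n + 1) l := by
      intro l hl
      rw [hHdS]
      split_ifs with hcase
      · exact ipos l ⟨hl.1, hcase⟩
      · have hbl : b < l := not_le.1 hcase
        have h1 : l - τs ∈ Icc (-τs) b := hshift l ⟨by linarith, hl.2⟩
        have h2 := hτd1 (G (H n (l - τs)))
        exact mul_pos (ipos _ h1) (inv_pos.2 (by linarith))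
    refine ⟨?_, hpos', ?_, ?_, ?_⟩
    · -- derivative
      intro l₀ hl₀
      rcases lt_trichotomy l₀ b with hlt | heq | hgt
      · have hmem : Icc (-τs) b ∈ nhdsWithin l₀ (Icc (-τs) (b + τs)) := by
          refine Filter.mem_of_superset (inter_mem_nhdsWithin _ (Iio_mem_nhds hlt)) ?_
          rintro x ⟨hx1, hx2⟩
          exact ⟨hx1.1, le_of_lt hx2⟩
        have h1 : HasDerivWithinAt (H (n + 1)) (Hd n l₀) (Icc (-τs) b) l₀ :=
          (ia l₀ ⟨hl₀.1, hlt.le⟩).congr hagree (hagree l₀ ⟨hl₀.1, hlt.le⟩)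
        rw [hdagree l₀ hlt.le]
        exact h1.mono_of_mem_nhdsWithin hmem
      · -- gluing point
        have hl₀S : l₀ ∈ Icc (0 : ℝ) (b + τs) := ⟨heq ▸ hb0, hl₀.2⟩
        have hL : HasDerivWithinAt (H (n + 1)) (Hd n b) (Icc (-τs) b) l₀ := by
          rw [heq]
          exact (ia b ⟨hbτ, le_rfl⟩).congr hagree (hagree b ⟨hbτ, le_rfl⟩)
        have hR : HasDerivWithinAt (H (n + 1)) (Hd n b) (Icc b (b + τs)) l₀ := by
          have h2 := (hψ l₀ hl₀S).mono (Icc_subset_Icc hb0 le_rfl)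
          have h3 : HasDerivWithinAt (H (n + 1))
              ((1 - deriv τ (G (H n (l₀ - τs))))⁻¹ * Hd n (l₀ - τs)) (Icc b (b + τs)) l₀ := by
            refine h2.congr ?_ ?_
            · intro x hx
              rw [hHS]
              by_cases hxb : x ≤ b
              · have hxx : x = b := le_antisymm hxb hx.1
                rw [if_pos (hxx ▸ le_rfl), hxx]
                exact hvb b hb0 le_rfl
              · rw [if_neg hxb]
            · rw [hHS, if_pos (heq ▸ le_rfl), heq]
              exact hvb b hb0 le_rfl
          have hval : (1 - deriv τ (G (H n (l₀ - τs))))⁻¹ * Hd n (l₀ - τs) = Hd n b := by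
            rw [heq, mul_comm]
            exact (hdb b hb0 le_rfl).symm
          rwa [hval] at h3
        have hun := hL.union hR
        rw [Icc_union_Icc_eq_Icc hbτ (by linarith)] at hun
        rw [hdagree l₀ heq.le, show Hd n l₀ = Hd n b by rw [heq]]
        exact hun
      · -- beyond the gluing point
        have hl₀S : l₀ ∈ Icc (0 : ℝ) (b + τs) := ⟨hb0.trans hgt.le, hl₀.2⟩
        have hmemS : Icc (0 : ℝ) (b + τs) ∈ nhdsWithin l₀ (Icc (-τs) (b + τs)) := by
          refine Filter.mem_of_superset (inter_mem_nhdsWithin _ (Ioi_mem_nhds hgt)) ?_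
          rintro x ⟨hx1, hx2⟩
          exact ⟨hb0.trans (le_of_lt hx2), hx1.2⟩
        have h2 := (hψ l₀ hl₀S).mono_of_mem_nhdsWithin hmemS
        have heqev : H (n + 1) =ᶠ[nhdsWithin l₀ (Icc (-τs) (b + τs))]
            fun l => G (H n (l - τs)) := by
          filter_upwards [inter_mem_nhdsWithin (Icc (-τs) (b + τs)) (Ioi_mem_nhds hgt)]
            with x hx
          rw [hHS]
          exact if_neg (not_le.2 hx.2)
        have h3 := h2.congr_of_eventuallyEq heqev (by rw [hHS]; exact if_neg (not_le.2 hgt))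
        rw [hHdS, if_neg (not_le.2 hgt), mul_comm]
        exact h3
    · -- continuity of the derivative
      have hHdshift : ContinuousOn (fun l => Hd n (l - τs)) (Icc (0 : ℝ) (b + τs)) :=
        icont.comp ((continuous_id.sub continuous_const).continuousOn) (fun l hl => hshift l hl)
      have hHshift : ContinuousOn (fun l => H n (l - τs)) (Icc (0 : ℝ) (b + τs)) :=
        hHcont.comp ((continuous_id.sub continuous_const).continuousOn) (fun l hl => hshift l hl)
      have hψdc : ContinuousOn
          (fun l => Hd n (l - τs) * (1 - deriv τ (G (H n (l - τs))))⁻¹)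
          (Icc (0 : ℝ) (b + τs)) := by
        refine hHdshift.mul (ContinuousOn.inv₀ ?_ ?_)
        · exact (continuous_const.sub (hτdc.comp hGc)).comp_continuousOn hHshift
        · exact fun l _ => hne _
      intro l₀ hl₀
      rcases lt_trichotomy l₀ b with hlt | heq | hgt
      · have hmem : Icc (-τs) b ∈ nhdsWithin l₀ (Icc (-τs) (b + τs)) := by
          refine Filter.mem_of_superset (inter_mem_nhdsWithin _ (Iio_mem_nhds hlt)) ?_
          rintro x ⟨hx1, hx2⟩
          exact ⟨hx1.1, le_of_lt hx2⟩
        have h1 : ContinuousWithinAt (Hd (n + 1)) (Icc (-τs) b) l₀ :=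
          (icont l₀ ⟨hl₀.1, hlt.le⟩).congr (fun x hx => hdagree x hx.2) (hdagree l₀ hlt.le)
        exact h1.mono_of_mem_nhdsWithin hmem
      · have hl₀S : l₀ ∈ Icc (0 : ℝ) (b + τs) := ⟨heq ▸ hb0, hl₀.2⟩
        have hL : ContinuousWithinAt (Hd (n + 1)) (Icc (-τs) b) l₀ :=
          (icont l₀ ⟨hl₀.1, heq.le⟩).congr (fun x hx => hdagree x hx.2) (hdagree l₀ heq.le)
        have hR : ContinuousWithinAt (Hd (n + 1)) (Icc b (b + τs)) l₀ := by
          have h2 := ((hψdc l₀ hl₀S).mono (Icc_subset_Icc hb0 le_rfl))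
          refine h2.congr ?_ ?_
          · intro x hx
            rw [hHdS]
            by_cases hxb : x ≤ b
            · have hxx : x = b := le_antisymm hxb hx.1
              rw [if_pos (hxx ▸ le_rfl), hxx]
              exact hdb b hb0 le_rfl
            · rw [if_neg hxb]
          · rw [hHdS, if_pos (heq ▸ le_rfl), heq]
            exact hdb b hb0 le_rfl
        have hun := hL.union hR
        rwa [Icc_union_Icc_eq_Icc hbτ (by linarith)] at hun
      · have hl₀S : l₀ ∈ Icc (0 : ℝ) (b + τs) := ⟨hb0.trans hgt.le, hl₀.2⟩
        have hmemS : Icc (0 : ℝ) (b + τs) ∈ nhdsWithin l₀ (Icc (-τs) (b + τs)) := by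
          refine Filter.mem_of_superset (inter_mem_nhdsWithin _ (Ioi_mem_nhds hgt)) ?_
          rintro x ⟨hx1, hx2⟩
          exact ⟨hb0.trans (le_of_lt hx2), hx1.2⟩
        have h2 := (hψdc l₀ hl₀S).mono_of_mem_nhdsWithin hmemS
        refine h2.congr_of_eventuallyEq ?_ (by rw [hHdS]; exact if_neg (not_le.2 hgt))
        filter_upwards [inter_mem_nhdsWithin (Icc (-τs) (b + τs)) (Ioi_mem_nhds hgt)] with x hx
        rw [hHdS]
        exact if_neg (not_le.2 hx.2)
    · -- Abel equation
      intro l hl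
      rw [hHS]
      by_cases hcase : l ≤ b
      · rw [if_pos hcase, hagree (l - τs) ⟨by linarith [hl.1], by linarith⟩]
        exact id_ l ⟨hl.1, hcase⟩
      · rw [if_neg hcase, hagree (l - τs) ⟨by linarith [hl.1], by linarith [hl.2]⟩]
        exact hFG _
    · -- derivative recursion
      intro l hl
      rw [hHdS]
      by_cases hcase : l ≤ b
      · rw [if_pos hcase, hdagree (l - τs) (by linarith), hHS, if_pos hcase]
        exact ie l ⟨hl.1, hcase⟩
      · rw [if_neg hcase, hdagree (l - τs) (by linarith [hl.2]), hHS, if_neg hcase]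

/-- For a continuously differentiable delay τ with τ'(t) < 1 and
0 < τ_min ≤ τ(t) ≤ τ_max, and for each τ* > 0, there exists a strictly
increasing, continuously differentiable time-transformation h on [−τ*, ∞)
with h(0) = 0 satisfying the Abel equation h(λ) − τ(h(λ)) = h(λ − τ*)
for all λ ≥ 0. -/
theorem exists_time_transformation
    (τ : ℝ → ℝ) (hτC1 : ContDiff ℝ 1 τ)
    (hτ' : ∀ t : ℝ, deriv τ t < 1)
    (τmin τmax : ℝ) (hτmin : 0 < τmin) (hτminmax : τmin ≤ τmax)
    (hbound : ∀ t : ℝ, τmin ≤ τ t ∧ τ t ≤ τmax)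
    (τs : ℝ) (hτs : 0 < τs) :
    ∃ h : ℝ → ℝ,
      StrictMonoOn h (Set.Ici (-τs)) ∧
      ContDiffOn ℝ 1 h (Set.Ici (-τs)) ∧
      h 0 = 0 ∧
      ∀ l : ℝ, 0 ≤ l → h l - τ (h l) = h (l - τs) := by
  -- derivative facts for `F t = t - τ t`
  have hτdiff : ∀ t, HasDerivAt τ (deriv τ t) t :=
    fun t => ((hτC1.differentiable one_ne_zero) t).hasDerivAt
  have hτdc : Continuous (deriv τ) := hτC1.continuous_deriv le_rfl
  have hF' : ∀ t, HasDerivAt (fun t => t - τ t) (1 - deriv τ t) t :=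
    fun t => (hasDerivAt_id t).sub (hτdiff t)
  have hF'pos : ∀ t : ℝ, 0 < 1 - deriv τ t := fun t => by linarith [hτ' t]
  have hFmono : StrictMono (fun t => t - τ t) := by
    apply strictMono_of_deriv_pos
    intro t
    rw [(hF' t).deriv]
    exact hF'pos t
  have hFcont : Continuous (fun t : ℝ => t - τ t) := continuous_id.sub hτC1.continuous
  have hFsurj : Function.Surjective (fun t : ℝ => t - τ t) := by
    intro y
    have h1 : y - τ y ≤ y - τmin := by linarith [(hbound y).1]
    have h2 : y ≤ y + τmax - τ (y + τmax) := by linarith [(hbound (y + τmax)).2]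
    have hy : y ∈ Icc ((fun t : ℝ => t - τ t) y) ((fun t : ℝ => t - τ t) (y + τmax)) :=
      ⟨by simpa using (by linarith : y - τ y ≤ y), by simpa using h2⟩
    have hIcc := intermediate_value_Icc
      (by linarith [lt_of_lt_of_le hτmin hτminmax] : y ≤ y + τmax) hFcont.continuousOn
    obtain ⟨t, _, ht⟩ := hIcc hy
    exact ⟨t, ht⟩
  set e := StrictMono.orderIsoOfSurjective _ hFmono hFsurj with he
  set G : ℝ → ℝ := fun x => e.symm x with hGdef
  have hGF : ∀ x, G (x - τ x) = x := fun x =>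
    StrictMono.orderIsoOfSurjective_symm_apply_self _ hFmono hFsurj x
  have hFG : ∀ x, G x - τ (G x) = x := fun x =>
    StrictMono.orderIsoOfSurjective_self_symm_apply _ hFmono hFsurj x
  have hGc : Continuous G := OrderIso.continuous e.symm
  have hG' : ∀ x, HasDerivAt G ((1 - deriv τ (G x))⁻¹) x := fun x =>
    HasDerivAt.of_local_left_inverse hGc.continuousAt (hF' (G x))
      (ne_of_gt (hF'pos (G x))) (Filter.Eventually.of_forall hFG)
  -- the initial piece φ
  have hc : 0 < τ 0 := lt_of_lt_of_le hτmin (hbound 0).1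
  have hd01 : deriv τ 0 < 1 := hτ' 0
  set c := τ 0 with hcdef
  set d0 := deriv τ 0 with hd0def
  have h2d : 0 < 2 - d0 := by linarith
  set q := 2 * c / (τs * (2 - d0)) with hqdef
  have hq : 0 < q := div_pos (by linarith) (by positivity)
  set p := q * (1 - d0) with hpdef
  have hp : 0 < p := mul_pos hq (by linarith)
  set r := (q - p) / (2 * τs) with hrdef
  set φ : ℝ → ℝ := fun l => q * l + r * l ^ 2 with hφdef
  set φd : ℝ → ℝ := fun l => q + r * (2 * l) with hφddef
  have hφ' : ∀ l, HasDerivAt φ (φd l) l := by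
    intro l
    have h1 : HasDerivAt φ (q * 1 + r * (((2 : ℕ) : ℝ) * l ^ (2 - 1))) l :=
      ((hasDerivAt_id l).const_mul q).add ((hasDerivAt_pow 2 l).const_mul r)
    convert h1 using 1
    push_cast
    ring
  have hφdc : Continuous φd := by
    apply Continuous.add continuous_const
    exact continuous_const.mul (continuous_const.mul continuous_id)
  have hφ0 : φ 0 = 0 := by simp [hφdef]
  have h2rτ : r * (2 * τs) = q - p := by
    rw [hrdef]
    field_simp
  have hφm : φ (-τs) = -c := by
    have hqp : (q + p) * τs = 2 * c := by
      rw [hpdef, hqdef]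
      field_simp
      ring
    have : φ (-τs) = -(q * τs) + r * (2 * τs) * (τs / 2) := by
      rw [hφdef]
      ring
    rw [this, h2rτ]
    nlinarith [hqp]
  have hφdpos : ∀ l ∈ Icc (-τs) 0, 0 < φd l := by
    intro l hl
    show 0 < q + r * (2 * l)
    rcases le_total 0 r with hr | hr
    · have key : 0 ≤ r * (l + τs) := mul_nonneg hr (by linarith [hl.1])
      nlinarith [h2rτ, hp]
    · have key : 0 ≤ (-r) * (-(2 * l)) :=
        mul_nonneg (neg_nonneg.2 hr) (neg_nonneg.2 (by linarith [hl.2]))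
      nlinarith [key, hq]
  have hbd : φ 0 - τ (φ 0) = φ (-τs) := by
    rw [hφ0, hφm, zero_sub, ← hcdef]
  have hbe : φd 0 = φd (-τs) * (1 - deriv τ (φ 0))⁻¹ := by
    have h1 : φd 0 = q := by simp [hφddef]
    have h2 : φd (-τs) = p := by
      have : φd (-τs) = q - r * (2 * τs) := by rw [hφddef]; ring
      rw [this, h2rτ]
      ring
    rw [h1, h2, hφ0, ← hd0def, hpdef]
    rw [mul_assoc, mul_inv_cancel₀ (by linarith : (1:ℝ) - d0 ≠ 0), mul_one]
  -- instantiate the invariant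
  set H : ℕ → ℝ → ℝ := timeH G φ τs with hHdef
  set Hd : ℕ → ℝ → ℝ := timeHd τ G φd H τs with hHddef
  have hH0 : ∀ l, H 0 l = φ l := fun l => rfl
  have hHS : ∀ n l, H (n + 1) l = if l ≤ (n : ℝ) * τs then H n l else G (H n (l - τs)) :=
    fun n l => rfl
  have hHd0 : ∀ l, Hd 0 l = φd l := fun l => rfl
  have hHdS : ∀ n l, Hd (n + 1) l = if l ≤ (n : ℝ) * τs then Hd n l
      else Hd n (l - τs) * (1 - deriv τ (G (H n (l - τs))))⁻¹ := fun n l => rfl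
  have inv := timeH_invariant τ G φ φd τs hτs hτdc hτ' hGc hG' hGF hFG hφ' hφdc hφdpos
    hbd hbe H Hd hH0 hHS hHd0 hHdS
  -- agreement lemmas
  have hHmono : ∀ m n : ℕ, m ≤ n → ∀ l, l ≤ (m : ℝ) * τs → H n l = H m l := by
    intro m n hmn
    induction n, hmn using Nat.le_induction with
    | base => intro l _; rfl
    | succ n hmn ihn =>
      intro l hl
      have h1 : l ≤ (n : ℝ) * τs :=
        le_trans hl (mul_le_mul_of_nonneg_right (Nat.cast_le.2 hmn) hτs.le)
      rw [hHS, if_pos h1]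
      exact ihn l hl
  set h : ℝ → ℝ := fun l => H (⌈l / τs⌉.toNat) l with hhdef
  have hh : ∀ (n : ℕ) (l : ℝ), l ≤ (n : ℝ) * τs → h l = H n l := by
    intro n l hl
    have hk1 : l ≤ ((⌈l / τs⌉.toNat : ℕ) : ℝ) * τs := by
      have h1 : l / τs ≤ (⌈l / τs⌉ : ℝ) := Int.le_ceil _
      have h2 : ((⌈l / τs⌉ : ℤ) : ℝ) ≤ ((⌈l / τs⌉.toNat : ℕ) : ℝ) := by
        exact_mod_cast Int.self_le_toNat _
      rw [div_le_iff₀ hτs] at h1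
      nlinarith [mul_le_mul_of_nonneg_right h2 hτs.le]
    have hk2 : ⌈l / τs⌉.toNat ≤ n := by
      apply Int.toNat_le.2
      apply Int.ceil_le.2
      rw [div_le_iff₀ hτs]
      push_cast
      linarith
    exact (hHmono _ n hk2 l hk1).symm
  refine ⟨h, ?_, ?_, ?_, ?_⟩
  · -- strict monotonicity
    intro x hx y hy hxy
    obtain ⟨n, hn⟩ := exists_nat_ge (y / τs)
    have hyn : y ≤ (n : ℝ) * τs := by
      rw [div_le_iff₀ hτs] at hn
      linarith
    have hxn : x ≤ (n : ℝ) * τs := le_trans hxy.le hyn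
    obtain ⟨ia, ipos, _, _, _⟩ := inv n
    have hmono : StrictMonoOn (H n) (Icc (-τs) ((n : ℝ) * τs)) := by
      apply strictMonoOn_of_deriv_pos (convex_Icc _ _)
      · exact fun l hl => (ia l hl).continuousWithinAt
      · intro z hz
        rw [interior_Icc] at hz
        have hz' : z ∈ Icc (-τs) ((n : ℝ) * τs) := Ioo_subset_Icc_self hz
        have hD : HasDerivAt (H n) (Hd n z) z :=
          (ia z hz').hasDerivAt (Icc_mem_nhds hz.1 hz.2)
        rw [hD.deriv]
        exact ipos z hz'
    rw [hh n x hxn, hh n y hyn]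
    exact hmono ⟨hx, hxn⟩ ⟨hy, hyn⟩ hxy
  · -- C¹ smoothness
    intro l₀ hl₀
    obtain ⟨n, hn⟩ := exists_nat_gt (l₀ / τs)
    have hl₀n : l₀ < (n : ℝ) * τs := by
      rw [div_lt_iff₀ hτs] at hn
      linarith
    obtain ⟨ia, ipos, icont, _, _⟩ := inv n
    have hab : -τs < (n : ℝ) * τs := lt_of_le_of_lt hl₀ hl₀n
    have hu : UniqueDiffOn ℝ (Icc (-τs) ((n : ℝ) * τs)) := uniqueDiffOn_Icc hab
    have hC1 : ContDiffOn ℝ 1 (H n) (Icc (-τs) ((n : ℝ) * τs)) := by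
      rw [show (1 : WithTop ℕ∞) = 0 + 1 from rfl, contDiffOn_succ_iff_derivWithin hu]
      refine ⟨fun l hl => (ia l hl).differentiableWithinAt, by simp, ?_⟩
      rw [contDiffOn_zero]
      apply icont.congr
      intro l hl
      exact (ia l hl).derivWithin (hu l hl)
    have hmem : Icc (-τs) ((n : ℝ) * τs) ∈ nhdsWithin l₀ (Ici (-τs)) := by
      have h1 : Iic ((n : ℝ) * τs) ∈ nhds l₀ := Iic_mem_nhds hl₀n
      have h2 := inter_mem_nhdsWithin (Ici (-τs)) h1
      rwa [Ici_inter_Iic] at h2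
    have h3 : ContDiffWithinAt ℝ 1 (H n) (Ici (-τs)) l₀ :=
      (hC1 l₀ ⟨hl₀, hl₀n.le⟩).mono_of_mem_nhdsWithin hmem
    refine h3.congr_of_eventuallyEq ?_ (hh n l₀ hl₀n.le)
    filter_upwards [hmem] with x hx
    exact hh n x hx.2
  · -- h 0 = 0
    have h1 : h 0 = H 0 0 := hh 0 0 (by simp)
    rw [h1, hH0, hφ0]
  · -- the Abel equation
    intro l hl
    obtain ⟨n, hn⟩ := exists_nat_ge (l / τs)
    have hln : l ≤ (n : ℝ) * τs := by
      rw [div_le_iff₀ hτs] at hn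
      linarith
    obtain ⟨_, _, _, id_, _⟩ := inv n
    rw [hh n l hln, hh n (l - τs) (by linarith)]
    exact id_ l ⟨hl, hln⟩
end

section
/- Let A₀, A₁ be real n×n matrices, let τ: ℝ → ℝ, let τ* > 0, and let h: ℝ → ℝ be differentiable, strictly increasing, with h(0) = 0 and satisfying h(λ) − τ(h(λ)) = h(λ − τ*) for all λ ≥ 0. If x: ℝ → ℝⁿ is differentiable and satisfies x'(t) = A₀ x(t) + A₁ x(t − τ(t)) for all t ≥ 0, then the function x̄ := x ∘ h is differentiable on [0, ∞) and satisfies x̄'(λ) = h'(λ) (A₀ x̄(λ) + A₁ x̄(λ − τ*)) for all λ ≥ 0. -/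
/-- If h is a differentiable, strictly increasing time-transformation
with h(0) = 0 satisfying the Abel equation h(λ) − τ(h(λ)) = h(λ − τ*) for λ ≥ 0,
and x solves the DDE x'(t) = A₀x(t) + A₁x(t − τ(t)) for t ≥ 0, then x̄ = x ∘ h is
differentiable on [0, ∞) with x̄'(λ) = h'(λ)(A₀x̄(λ) + A₁x̄(λ − τ*)) for λ ≥ 0. -/
theorem time_transformed_DDE_forward
    (n : ℕ) (A₀ A₁ : Matrix (Fin n) (Fin n) ℝ) (τ : ℝ → ℝ)
    (τs : ℝ) (hτs : 0 < τs)
    (h : ℝ → ℝ) (hhdiff : Differentiable ℝ h) (hhmono : StrictMono h)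
    (hh0 : h 0 = 0)
    (habel : ∀ l : ℝ, 0 ≤ l → h l - τ (h l) = h (l - τs))
    (x : ℝ → Fin n → ℝ) (hxdiff : Differentiable ℝ x)
    (hdde : ∀ t : ℝ, 0 ≤ t → deriv x t = A₀.mulVec (x t) + A₁.mulVec (x (t - τ t))) :
    ∀ l : ℝ, 0 ≤ l →
      HasDerivAt (fun μ : ℝ => x (h μ))
        (deriv h l • (A₀.mulVec (x (h l)) + A₁.mulVec (x (h (l - τs))))) l := by
  intro l hl
  have hhl : 0 ≤ h l := hh0 ▸ hhmono.monotone hl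
  have hcomp : HasDerivAt (fun μ : ℝ => x (h μ)) (deriv h l • deriv x (h l)) l :=
    ((hxdiff (h l)).hasDerivAt.scomp l (hhdiff l).hasDerivAt)
  have hkey : deriv x (h l) = A₀.mulVec (x (h l)) + A₁.mulVec (x (h (l - τs))) := by
    rw [hdde (h l) hhl, ← habel l hl]
  rwa [hkey] at hcomp
end

section
/- Let A₀, A₁ be real n×n matrices, let τ: ℝ → ℝ, let τ* > 0, and let h: ℝ → ℝ be a differentiable bijection with h'(λ) > 0 for all λ, h(0) = 0, and h(λ) − τ(h(λ)) = h(λ − τ*) for all λ ≥ 0. If x̄: ℝ → ℝⁿ is differentiable and satisfies x̄'(λ) = h'(λ) (A₀ x̄(λ) + A₁ x̄(λ − τ*)) for all λ ≥ 0, then the function x := x̄ ∘ h⁻¹ is differentiable on [0, ∞) and satisfies x'(t) = A₀ x(t) + A₁ x(t − τ(t)) for all t ≥ 0. -/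
/-- If h is a differentiable bijection with h' > 0, h(0) = 0,
satisfying the Abel equation, and x̄ solves the transformed DDE
x̄'(λ) = h'(λ)(A₀x̄(λ) + A₁x̄(λ − τ*)) for λ ≥ 0, then x = x̄ ∘ h⁻¹ is
differentiable on [0, ∞) and solves the original DDE
x'(t) = A₀x(t) + A₁x(t − τ(t)) for t ≥ 0. -/
theorem time_transformed_DDE_backward
    (n : ℕ) (A₀ A₁ : Matrix (Fin n) (Fin n) ℝ) (τ : ℝ → ℝ)
    (τs : ℝ) (hτs : 0 < τs)
    (h : ℝ → ℝ) (hhbij : Function.Bijective h) (hhdiff : Differentiable ℝ h)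
    (hh' : ∀ l : ℝ, 0 < deriv h l) (hh0 : h 0 = 0)
    (habel : ∀ l : ℝ, 0 ≤ l → h l - τ (h l) = h (l - τs))
    (xb : ℝ → Fin n → ℝ) (hxbdiff : Differentiable ℝ xb)
    (hdde : ∀ l : ℝ, 0 ≤ l →
      deriv xb l = deriv h l • (A₀.mulVec (xb l) + A₁.mulVec (xb (l - τs)))) :
    ∀ t : ℝ, 0 ≤ t →
      HasDerivAt (fun s : ℝ => xb (Function.invFun h s))
        (A₀.mulVec (xb (Function.invFun h t)) +
          A₁.mulVec (xb (Function.invFun h (t - τ t)))) t := by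
  intro t ht
  set g := Function.invFun h with hg
  have hmono : StrictMono h := by
    apply strictMono_of_deriv_pos hh'
  have hgr : Function.RightInverse g h := Function.rightInverse_invFun hhbij.2
  have hgl : Function.LeftInverse g h := Function.leftInverse_invFun hhbij.1
  -- continuity of g
  have hcont : Continuous g := by
    have : g = (hmono.orderIsoOfSurjective h hhbij.2).symm := by
      funext s
      apply hhbij.1
      rw [hgr s]
      exact ((hmono.orderIsoOfSurjective h hhbij.2).apply_symm_apply s).symm
    rw [this]
    exact (hmono.orderIsoOfSurjective h hhbij.2).symm.continuous
  set l := g t with hl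
  have hhl : h l = t := hgr t
  have hl0 : 0 ≤ l := by
    by_contra hneg
    push_neg at hneg
    have := hmono hneg
    rw [hhl, hh0] at this
    linarith
  have hd := hh' l
  have hgderiv : HasDerivAt g (deriv h l)⁻¹ t := by
    have := HasDerivAt.of_local_left_inverse (hcont.continuousAt)
      ((hhdiff l).hasDerivAt) (ne_of_gt hd) ?_
    · exact this
    · exact Filter.Eventually.of_forall hgr
  have hxb : HasDerivAt xb (deriv xb l) l := (hxbdiff l).hasDerivAt
  have hcomp : HasDerivAt (fun s : ℝ => xb (g s))
      ((deriv h l)⁻¹ • deriv xb l) t := by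
    have := HasDerivAt.scomp_of_eq (𝕜' := ℝ) t hxb hgderiv rfl
    exact this
  have harg : g (t - τ t) = l - τs := by
    have := habel l hl0
    rw [hhl] at this
    rw [this]; exact hgl _
  rw [hdde l hl0] at hcomp
  rw [smul_smul, inv_mul_cancel₀ (ne_of_gt hd), one_smul] at hcomp
  rw [harg]
  exact hcomp
end

section
/- Let τ: ℝ → ℝ be continuous and suppose g(t) := t − τ(t) is a strictly increasing continuous bijection of ℝ with inverse g⁻¹. Let τ* > 0 and let φ: [−τ*, 0] → ℝ be continuous and strictly increasing with φ(0) = 0 and φ(−τ*) = −τ(0). Define h: [−τ*, ∞) → ℝ by h(λ) := (g⁻¹)^k(φ(λ − k τ*)) for λ ∈ [(k−1)τ*, kτ*) and each integer k ≥ 0. Then h is continuous and strictly increasing on [−τ*, ∞). -/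
open Set


/-- If τ is continuous, g(t) = t − τ(t) is a strictly increasing
continuous bijection of ℝ with inverse g⁻¹, and φ : [−τ*, 0] → ℝ is continuous
and strictly increasing with φ(0) = 0 and φ(−τ*) = −τ(0), then the propagated
function h(λ) = (g⁻¹)^k(φ(λ − kτ*)) for λ ∈ [(k−1)τ*, kτ*) is continuous and
strictly increasing on [−τ*, ∞). -/
theorem propagated_seed_continuous_strictMono
    (τ : ℝ → ℝ) (hτc : Continuous τ)
    (g ginv : ℝ → ℝ) (hg : ∀ t : ℝ, g t = t - τ t)
    (hgmono : StrictMono g) (hgcont : Continuous g) (hgbij : Function.Bijective g)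
    (hli : Function.LeftInverse ginv g) (hri : Function.RightInverse ginv g)
    (τs : ℝ) (hτs : 0 < τs) (φ : ℝ → ℝ)
    (hφc : ContinuousOn φ (Set.Icc (-τs) 0))
    (hφmono : StrictMonoOn φ (Set.Icc (-τs) 0))
    (hφ0 : φ 0 = 0) (hφτ : φ (-τs) = -τ 0)
    (h : ℝ → ℝ)
    (hdef : ∀ k : ℕ, ∀ l : ℝ, ((k : ℝ) - 1) * τs ≤ l → l < (k : ℝ) * τs →
      h l = ginv^[k] (φ (l - (k : ℝ) * τs))) :
    ContinuousOn h (Set.Ici (-τs)) ∧ StrictMonoOn h (Set.Ici (-τs)) := by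
  -- ginv is strictly monotone
  have hginv_mono : StrictMono ginv := fun a b hab => by
    have := hgmono.lt_iff_lt (a := ginv a) (b := ginv b)
    rw [hri a, hri b] at this
    exact this.mp hab
  -- ginv is continuous
  have hginv_cont : Continuous ginv := by
    let e : ℝ ≃o ℝ := StrictMono.orderIsoOfSurjective g hgmono hgbij.2
    have he : ∀ x, e x = g x := fun x => rfl
    have hge : ginv = ⇑e.symm := by
      funext x
      apply hgmono.injective
      rw [hri x, ← he, e.apply_symm_apply]
    rw [hge]
    exact OrderIso.continuous e.symm
  have hginvk_mono : ∀ k : ℕ, StrictMono (ginv^[k]) := fun k => hginv_mono.iterate k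
  have hginvk_cont : ∀ k : ℕ, Continuous (ginv^[k]) := fun k => by
    induction k with
    | zero => simpa using continuous_id
    | succ n ih => rw [Function.iterate_succ]; exact ih.comp hginv_cont
  -- the pieces
  set f : ℕ → ℝ → ℝ := fun k l => ginv^[k] (φ (l - (k : ℝ) * τs)) with hf
  set I : ℕ → Set ℝ := fun k => Icc (((k : ℝ) - 1) * τs) ((k : ℝ) * τs) with hI
  have hmaps : ∀ k : ℕ, ∀ l ∈ I k, l - (k : ℝ) * τs ∈ Icc (-τs) 0 := by
    intro k l hl
    obtain ⟨h1, h2⟩ := hl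
    constructor <;> nlinarith
  -- h agrees with f k on I k
  have heq : ∀ k : ℕ, EqOn h (f k) (I k) := by
    intro k l hl
    obtain ⟨h1, h2⟩ := hl
    rcases lt_or_eq_of_le h2 with hlt | hEq
    · exact hdef k l h1 hlt
    · have hd := hdef (k + 1) l (by push_cast; linarith) (by push_cast; nlinarith)
      have hsub : l - ((k : ℝ) + 1) * τs = -τs := by rw [hEq]; ring
      have : h l = ginv^[k + 1] (φ (-τs)) := by rw [hd]; push_cast; rw [hsub]
      rw [this, hφτ, Function.iterate_succ_apply]
      have hg0 : g 0 = -τ 0 := by rw [hg]; ring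
      rw [← hg0, hli 0, hf]
      simp only [hEq]
      rw [show (k : ℝ) * τs - (k : ℝ) * τs = 0 by ring, hφ0]
  -- continuity on each piece
  have hcI : ∀ k : ℕ, ContinuousOn h (I k) := by
    intro k
    apply ContinuousOn.congr _ (heq k)
    exact (hginvk_cont k).comp_continuousOn
      (hφc.comp (continuous_id.sub continuous_const).continuousOn (hmaps k))
  -- strict monotonicity on each piece
  have hmI : ∀ k : ℕ, StrictMonoOn h (I k) := by
    intro k x hx y hy hxy
    rw [heq k hx, heq k hy]
    exact (hginvk_mono k) (hφmono (hmaps k x hx) (hmaps k y hy) (by linarith))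
  -- covering: each point of Ici (-τs) lies in some [(k-1)τs, kτs)
  have hcover : ∀ x : ℝ, -τs ≤ x → ∃ k : ℕ, ((k : ℝ) - 1) * τs ≤ x ∧ x < (k : ℝ) * τs := by
    intro x hx
    have hex : ∃ n : ℕ, x < (n : ℝ) * τs := by
      obtain ⟨n, hn⟩ := exists_nat_gt (x / τs)
      exact ⟨n, by rwa [div_lt_iff₀ hτs] at hn⟩
    classical
    refine ⟨Nat.find hex, ?_, Nat.find_spec hex⟩
    rcases Nat.eq_zero_or_pos (Nat.find hex) with h0 | hpos
    · rw [h0]; push_cast; linarith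
    · have := Nat.find_min hex (m := Nat.find hex - 1) (by omega)
      push_neg at this
      have hc : ((Nat.find hex : ℝ) - 1) = ((Nat.find hex - 1 : ℕ) : ℝ) := by
        have : (1:ℕ) ≤ Nat.find hex := hpos
        push_cast [Nat.cast_sub this]; ring
      rw [hc]; exact this
  constructor
  · -- continuity
    intro x hx
    obtain ⟨k, hk1, hk2⟩ := hcover x hx
    rcases lt_or_eq_of_le hk1 with hlt | hEq
    · exact ((hcI k) x ⟨hlt.le, hk2.le⟩).mono_of_mem_nhdsWithin
        (mem_nhdsWithin_of_mem_nhds (Icc_mem_nhds hlt hk2))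
    · rcases Nat.eq_zero_or_pos k with h0 | hpos
      · -- x = -τs
        subst h0
        have hx0 : x = -τs := by push_cast at hEq; linarith
        have hxI : x ∈ I 0 := ⟨hEq.le, hk2.le⟩
        refine ((hcI 0) x hxI).mono_of_mem_nhdsWithin ?_
        refine Filter.mem_of_superset (Filter.inter_mem
          (mem_nhdsWithin_of_mem_nhds (Iio_mem_nhds
            (show x < (0:ℝ) by rw [hx0]; linarith))) self_mem_nhdsWithin) ?_
        intro z hz
        simp only [hI, mem_Icc]
        push_cast
        exact ⟨by linarith [hz.2.out], by linarith [hz.1.out]⟩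
      · -- x = (k-1)τs with k ≥ 1, glue I (k-1) and I k
        obtain ⟨m, rfl⟩ : ∃ m, k = m + 1 := ⟨k - 1, by omega⟩
        have hxm : x = (m : ℝ) * τs := by push_cast at hEq ⊢; linarith
        have hx1 : x ∈ I m := ⟨by nlinarith [hxm], hxm.le⟩
        have hx2 : x ∈ I (m + 1) := ⟨hEq.le, hk2.le⟩
        refine (((hcI m) x hx1).union ((hcI (m + 1)) x hx2)).mono_of_mem_nhdsWithin ?_
        apply mem_nhdsWithin_of_mem_nhds
        refine Filter.mem_of_superset (Ioo_mem_nhds (a := ((m : ℝ) - 1) * τs)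
          (b := ((m : ℝ) + 1) * τs) (by nlinarith [hxm]) (by nlinarith [hxm])) ?_
        intro z hz
        rcases le_or_gt z ((m : ℝ) * τs) with hzm | hzm
        · exact Or.inl ⟨hz.1.le, hzm⟩
        · refine Or.inr ⟨by push_cast; linarith, by push_cast; linarith [hz.2]⟩
  · -- strict monotonicity: first on Icc (-τs) (k*τs) by induction
    have hmono : ∀ k : ℕ, StrictMonoOn h (Icc (-τs) ((k : ℝ) * τs)) := by
      intro k
      induction k with
      | zero =>
        intro x hx y hy hxy
        simp only [Nat.cast_zero, zero_mul] at hx hy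
        exact hmI 0 ⟨by push_cast; linarith [hx.1], by push_cast; linarith [hx.2]⟩
          ⟨by push_cast; linarith [hy.1], by push_cast; linarith [hy.2]⟩ hxy
      | succ n ih =>
        intro x hx y hy hxy
        have hIn : ∀ z : ℝ, (n : ℝ) * τs ≤ z → z ≤ ((n : ℝ) + 1) * τs → z ∈ I (n + 1) := by
          intro z h1 h2
          exact ⟨by push_cast; linarith, by push_cast; linarith⟩
        rcases le_or_gt y ((n : ℝ) * τs) with hy' | hy'
        · exact ih ⟨hx.1, by linarith [hxy.le]⟩ ⟨hy.1, hy'⟩ hxy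
        · rcases le_or_gt ((n : ℝ) * τs) x with hx' | hx'
          · exact hmI (n + 1) (hIn x hx' (by push_cast at hx ⊢; linarith [hx.2]))
              (hIn y hy'.le (by push_cast at hy ⊢; linarith [hy.2])) hxy
          · have hnn : -τs ≤ (n : ℝ) * τs := by
              have : (0:ℝ) ≤ (n : ℝ) * τs := by positivity
              linarith
            have l1 : h x < h ((n : ℝ) * τs) := ih ⟨hx.1, hx'.le⟩ ⟨hnn, le_refl _⟩ hx'
            have l2 : h ((n : ℝ) * τs) < h y := hmI (n + 1)
              (hIn _ le_rfl (by push_cast; nlinarith))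
              (hIn y hy'.le (by push_cast at hy ⊢; linarith [hy.2])) hy'
            linarith
    intro x hx y hy hxy
    obtain ⟨k, _, hk2⟩ := hcover y hy
    exact hmono k ⟨hx, by linarith [hk2.le]⟩ ⟨hy, hk2.le⟩ hxy
end

section
/- Let ω, τ₀, τ* > 0 and suppose k ω τ₀ ∉ 2πℤ for every nonzero integer k. Let a: ℤ → ℂ be a summable family with a₀ = 0, define b_k := a_k / (1 − exp(−i k ω τ₀)) for k ≠ 0 and b₀ := −∑_{k≠0} b_k, and assume the family (b_k)_{k∈ℤ} is summable. Define τ̃(t) := ∑_{k∈ℤ} a_k exp(i k ω t) and h₁(λ) := ∑_{k∈ℤ} b_k exp(i k ω (τ₀/τ*) λ). Then h₁(0) = 0 and h₁(λ) − τ̃((τ₀/τ*) λ) = h₁(λ − τ*) for every λ ∈ ℝ. -/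
lemma norm_exp_I_mul (x : ℝ) : ‖Complex.exp ((x : ℂ) * Complex.I)‖ = 1 := by
  simpa using Complex.abs_exp_ofReal_mul_I x

/-- First-order perturbative expansion. With b_k = a_k/(1 − e^{−ikωτ₀})
for k ≠ 0 and b₀ = −∑_{k≠0} b_k, the function h₁(λ) = ∑_k b_k e^{ikω(τ₀/τ*)λ}
satisfies h₁(0) = 0 and the first-order functional equation
h₁(λ) − τ̃((τ₀/τ*)λ) = h₁(λ − τ*), where τ̃(t) = ∑_k a_k e^{ikωt}. -/
theorem first_order_expansion_functional_equation
    (ω τ₀ τs : ℝ) (hω : 0 < ω) (hτ₀ : 0 < τ₀) (hτs : 0 < τs)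
    (hres : ∀ k : ℤ, k ≠ 0 → ¬ ∃ m : ℤ, (k : ℝ) * ω * τ₀ = 2 * Real.pi * (m : ℝ))
    (a : ℤ → ℂ) (ha : Summable a) (ha0 : a 0 = 0)
    (b : ℤ → ℂ)
    (hbk : ∀ k : ℤ, k ≠ 0 →
      b k = a k / (1 - Complex.exp (-(Complex.I * (k : ℂ) * (ω : ℂ) * (τ₀ : ℂ)))))
    (hb0 : b 0 = -∑' k : {k : ℤ // k ≠ 0}, b (k : ℤ))
    (hb : Summable b)
    (τt : ℝ → ℂ)
    (hτt : ∀ t : ℝ, τt t = ∑' k : ℤ, a k * Complex.exp (Complex.I * (k : ℂ) * (ω : ℂ) * (t : ℂ)))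
    (h₁ : ℝ → ℂ)
    (hh₁ : ∀ l : ℝ, h₁ l =
      ∑' k : ℤ, b k * Complex.exp (Complex.I * (k : ℂ) * (ω : ℂ) * ((τ₀ / τs : ℝ) : ℂ) * (l : ℂ))) :
    h₁ 0 = 0 ∧ ∀ l : ℝ, h₁ l - τt (τ₀ / τs * l) = h₁ (l - τs) := by
  have hτs' : (τs : ℂ) ≠ 0 := by exact_mod_cast hτs.ne'
  -- the exponent as a real multiple of I
  have harg : ∀ (k : ℤ) (l : ℝ),
      Complex.I * (k : ℂ) * (ω : ℂ) * ((τ₀ / τs : ℝ) : ℂ) * (l : ℂ)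
        = ((k * ω * (τ₀ / τs) * l : ℝ) : ℂ) * Complex.I := by
    intro k l; push_cast; ring
  -- summability of the h₁ series for every l
  have hsum : ∀ l : ℝ, Summable (fun k : ℤ =>
      b k * Complex.exp (Complex.I * (k : ℂ) * (ω : ℂ) * ((τ₀ / τs : ℝ) : ℂ) * (l : ℂ))) := by
    intro l
    apply Summable.of_norm
    simp only [norm_mul, harg, norm_exp_I_mul, mul_one]
    exact hb.norm
  -- part 1 : h₁ 0 = 0
  have h10 : h₁ 0 = 0 := by
    rw [hh₁ 0]
    have : (fun k : ℤ => b k * Complex.exp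
        (Complex.I * (k : ℂ) * (ω : ℂ) * ((τ₀ / τs : ℝ) : ℂ) * ((0 : ℝ) : ℂ))) = b := by
      funext k; simp
    rw [this]
    have hsplit : ∑' k : ℤ, b k = b 0 + ∑' k : {k : ℤ // k ≠ 0}, b (k : ℤ) := by
      have := Summable.tsum_eq_add_tsum_ite hb (0 : ℤ)
      rw [this]
      congr 1
      calc (∑' n : ℤ, if n = 0 then 0 else b n)
          = ∑' n : ℤ, Set.indicator {k : ℤ | k ≠ 0} b n := by
            apply tsum_congr; intro k
            by_cases hk : k = 0 <;> simp [hk]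
        _ = ∑' k : {k : ℤ // k ≠ 0}, b (k : ℤ) := (tsum_subtype _ _).symm
    rw [hsplit, hb0]
    ring
  refine ⟨h10, fun l => ?_⟩
  rw [hh₁ l, hh₁ (l - τs), hτt]
  have key : (∑' k : ℤ, b k * Complex.exp (Complex.I * (k : ℂ) * (ω : ℂ) * ((τ₀ / τs : ℝ) : ℂ) * (l : ℂ)))
      - (∑' k : ℤ, b k * Complex.exp (Complex.I * (k : ℂ) * (ω : ℂ) * ((τ₀ / τs : ℝ) : ℂ) * ((l - τs : ℝ) : ℂ)))
      = ∑' k : ℤ, a k * Complex.exp (Complex.I * (k : ℂ) * (ω : ℂ) * ((τ₀ / τs * l : ℝ) : ℂ)) := by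
    rw [← Summable.tsum_sub (hsum l) (hsum (l - τs))]
    apply tsum_congr
    intro k
    by_cases hk : k = 0
    · subst hk; simp [ha0]
    · -- nonzero denominator
      have hden : 1 - Complex.exp (-(Complex.I * (k : ℂ) * (ω : ℂ) * (τ₀ : ℂ))) ≠ 0 := by
        intro h
        have hexp : Complex.exp (-(Complex.I * (k : ℂ) * (ω : ℂ) * (τ₀ : ℂ))) = 1 := by
          linear_combination -h
        rw [Complex.exp_eq_one_iff] at hexp
        obtain ⟨n, hn⟩ := hexp
        apply hres k hk
        refine ⟨-n, ?_⟩
        have : -(Complex.I * (k : ℂ) * (ω : ℂ) * (τ₀ : ℂ))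
            = (((-(k * ω * τ₀) : ℝ)) : ℂ) * Complex.I := by push_cast; ring
        rw [this] at hn
        have hn' : ((-(k * ω * τ₀) : ℝ) : ℂ) = (n : ℂ) * (2 * Real.pi) := by
          have hI : (Complex.I : ℂ) ≠ 0 := Complex.I_ne_zero
          have h2 : ((-(k * ω * τ₀) : ℝ) : ℂ) * Complex.I
              = ((n : ℂ) * (2 * Real.pi)) * Complex.I := by
            push_cast at hn ⊢; linear_combination hn
          exact mul_right_cancel₀ hI h2
        have : -((k : ℝ) * ω * τ₀) = (n : ℝ) * (2 * Real.pi) := by exact_mod_cast hn'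
        push_cast
        linarith
      have hbkk := hbk k hk
      have hak : a k = b k * (1 - Complex.exp (-(Complex.I * (k : ℂ) * (ω : ℂ) * (τ₀ : ℂ)))) := by
        rw [hbkk]; field_simp
      -- exponent shift
      have hshift : Complex.exp (Complex.I * (k : ℂ) * (ω : ℂ) * ((τ₀ / τs : ℝ) : ℂ) * ((l - τs : ℝ) : ℂ))
          = Complex.exp (Complex.I * (k : ℂ) * (ω : ℂ) * ((τ₀ / τs : ℝ) : ℂ) * (l : ℂ))
            * Complex.exp (-(Complex.I * (k : ℂ) * (ω : ℂ) * (τ₀ : ℂ))) := by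
        rw [← Complex.exp_add]
        congr 1
        push_cast
        field_simp
        ring
      rw [hak, hshift]
      have hcast : (((τ₀ / τs * l : ℝ)) : ℂ) = ((τ₀ / τs : ℝ) : ℂ) * (l : ℂ) := by push_cast; ring
      rw [hcast]
      ring
  linear_combination key
end

section
/- Let ω, τ₀, τ* > 0 and suppose k ω τ₀ ∉ 2πℤ for every nonzero integer k. Let m: ℤ → ℂ be a summable family, define c_k := m_k / (1 − exp(−i k ω τ₀)) for k ≠ 0 and c₀ := −∑_{k≠0} c_k, and assume the family (c_k)_{k∈ℤ} is summable. Define h₂(λ) := (m₀/τ*) λ + ∑_{k∈ℤ} c_k exp(i k ω (τ₀/τ*) λ). Then h₂(0) = 0 and h₂(λ) − ∑_{k∈ℤ} m_k exp(i k ω (τ₀/τ*) λ) = h₂(λ − τ*) for every λ ∈ ℝ. -/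
private lemma aux_norm_exp (z : ℂ) (hz : z.re = 0) : ‖Complex.exp z‖ = 1 := by
  rw [Complex.norm_exp, hz, Real.exp_zero]

/-- Second-order perturbative expansion. With c_k = m_k/(1 − e^{−ikωτ₀})
for k ≠ 0 and c₀ = −∑_{k≠0} c_k, the function
h₂(λ) = (m₀/τ*)λ + ∑_k c_k e^{ikω(τ₀/τ*)λ} satisfies h₂(0) = 0 and
h₂(λ) − ∑_k m_k e^{ikω(τ₀/τ*)λ} = h₂(λ − τ*) for all λ ∈ ℝ. -/
theorem second_order_expansion_functional_equation
    (ω τ₀ τs : ℝ) (hω : 0 < ω) (hτ₀ : 0 < τ₀) (hτs : 0 < τs)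
    (hres : ∀ k : ℤ, k ≠ 0 → ¬ ∃ n : ℤ, (k : ℝ) * ω * τ₀ = 2 * Real.pi * (n : ℝ))
    (m : ℤ → ℂ) (hm : Summable m)
    (c : ℤ → ℂ)
    (hck : ∀ k : ℤ, k ≠ 0 →
      c k = m k / (1 - Complex.exp (-(Complex.I * (k : ℂ) * (ω : ℂ) * (τ₀ : ℂ)))))
    (hc0 : c 0 = -∑' k : {k : ℤ // k ≠ 0}, c (k : ℤ))
    (hc : Summable c)
    (h₂ : ℝ → ℂ)
    (hh₂ : ∀ l : ℝ, h₂ l = (m 0 / (τs : ℂ)) * (l : ℂ) +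
      ∑' k : ℤ, c k * Complex.exp (Complex.I * (k : ℂ) * (ω : ℂ) * ((τ₀ / τs : ℝ) : ℂ) * (l : ℂ))) :
    h₂ 0 = 0 ∧
      ∀ l : ℝ, h₂ l -
        (∑' k : ℤ, m k * Complex.exp (Complex.I * (k : ℂ) * (ω : ℂ) * ((τ₀ / τs : ℝ) : ℂ) * (l : ℂ)))
        = h₂ (l - τs) := by
  have hτs' : (τs : ℝ) ≠ 0 := ne_of_gt hτs
  -- norm of the exponentials is 1
  have habs : ∀ (k : ℤ) (l : ℝ),
      ‖Complex.exp (Complex.I * (k : ℂ) * (ω : ℂ) * ((τ₀ / τs : ℝ) : ℂ) * (l : ℂ))‖ = 1 := by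
    intro k l
    have h1 : (Complex.I * (k : ℂ) * (ω : ℂ) * ((τ₀ / τs : ℝ) : ℂ) * (l : ℂ))
        = ((k * ω * (τ₀ / τs) * l : ℝ) : ℂ) * Complex.I := by push_cast; ring
    rw [h1]
    exact aux_norm_exp _ (by simp)
  have habs2 : ∀ (k : ℤ),
      ‖Complex.exp (-(Complex.I * (k : ℂ) * (ω : ℂ) * (τ₀ : ℂ)))‖ = 1 := by
    intro k
    have h1 : (-(Complex.I * (k : ℂ) * (ω : ℂ) * (τ₀ : ℂ)))
        = ((-(k * ω * τ₀) : ℝ) : ℂ) * Complex.I := by push_cast; ring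
    rw [h1]
    exact aux_norm_exp _ (by simp)
  -- summability helper
  have key : ∀ (d : ℤ → ℂ), Summable d → ∀ l : ℝ, Summable (fun k : ℤ =>
      d k * Complex.exp (Complex.I * (k : ℂ) * (ω : ℂ) * ((τ₀ / τs : ℝ) : ℂ) * (l : ℂ))) := by
    intro d hd l
    refine Summable.of_norm_bounded hd.norm (fun k => ?_)
    rw [norm_mul, habs k l, mul_one]
  -- the denominator is nonzero
  have hden : ∀ k : ℤ, k ≠ 0 →
      (1 - Complex.exp (-(Complex.I * (k : ℂ) * (ω : ℂ) * (τ₀ : ℂ)))) ≠ 0 := by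
    intro k hk h
    have hexp : Complex.exp (-(Complex.I * (k : ℂ) * (ω : ℂ) * (τ₀ : ℂ))) = 1 := by
      have := sub_eq_zero.mp h
      exact this.symm
    rw [Complex.exp_eq_one_iff] at hexp
    obtain ⟨n, hn⟩ := hexp
    apply hres k hk
    refine ⟨-n, ?_⟩
    have hre := congrArg Complex.im hn
    simp [Complex.mul_im, Complex.mul_re] at hre
    push_cast at hre ⊢
    linarith [hre]
  -- the total sum of c is zero
  have hsumc : ∑' k : ℤ, c k = 0 := by
    have hsplit := Summable.tsum_eq_add_tsum_ite hc 0
    have hsub : ∑' k : {k : ℤ // k ≠ 0}, c (k : ℤ)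
        = ∑' k : ℤ, if k = 0 then 0 else c k := by
      refine (tsum_subtype ({k : ℤ | k ≠ 0}) c).trans (tsum_congr (fun k => ?_))
      by_cases hk : k = 0 <;> simp [Set.indicator, hk]
    rw [hsplit, ← hsub, hc0]
    ring
  constructor
  · rw [hh₂ 0]
    simp only [Complex.ofReal_zero, mul_zero, zero_add, Complex.exp_zero, mul_one]
    simpa using hsumc
  · intro l
    rw [hh₂ l, hh₂ (l - τs)]
    -- rewrite the shifted exponential
    have hshift : ∀ k : ℤ,
        Complex.exp (Complex.I * (k : ℂ) * (ω : ℂ) * ((τ₀ / τs : ℝ) : ℂ) * ((l - τs : ℝ) : ℂ))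
        = Complex.exp (Complex.I * (k : ℂ) * (ω : ℂ) * ((τ₀ / τs : ℝ) : ℂ) * (l : ℂ))
          * Complex.exp (-(Complex.I * (k : ℂ) * (ω : ℂ) * (τ₀ : ℂ))) := by
      intro k
      rw [← Complex.exp_add]
      congr 1
      have hτsC : (τs : ℂ) ≠ 0 := Complex.ofReal_ne_zero.mpr hτs'
      push_cast
      field_simp
      ring
    -- abbreviations
    set a : ℤ → ℂ := fun k =>
      Complex.exp (Complex.I * (k : ℂ) * (ω : ℂ) * ((τ₀ / τs : ℝ) : ℂ) * (l : ℂ)) with ha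
    have ha0 : a 0 = 1 := by simp [ha]
    have hsumca : Summable (fun k => c k * a k) := key c hc l
    have hsumma : Summable (fun k => m k * a k) := key m hm l
    have hsumg : Summable (fun k =>
        c k * Complex.exp (-(Complex.I * (k : ℂ) * (ω : ℂ) * (τ₀ : ℂ))) * a k) := by
      refine Summable.of_norm_bounded hc.norm (fun k => ?_)
      rw [norm_mul, norm_mul, habs2 k, habs k l, mul_one, mul_one]
    -- termwise identity
    have hterm : ∀ k : ℤ, (c k - m k) * a k
        = c k * Complex.exp (-(Complex.I * (k : ℂ) * (ω : ℂ) * (τ₀ : ℂ))) * a k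
          + (if k = 0 then -m 0 else 0) := by
      intro k
      by_cases hk : k = 0
      · subst hk
        have h0 : (-(Complex.I * ((0 : ℤ) : ℂ) * (ω : ℂ) * (τ₀ : ℂ))) = 0 := by push_cast; ring
        rw [h0, Complex.exp_zero, ha0]
        simp
        ring
      · rw [if_neg hk, add_zero]
        have hmk : m k = c k * (1 - Complex.exp (-(Complex.I * (k : ℂ) * (ω : ℂ) * (τ₀ : ℂ)))) := by
          rw [hck k hk, div_mul_cancel₀ _ (hden k hk)]
        rw [hmk]
        ring
    have hite : Summable (fun k : ℤ => if k = 0 then -m 0 else 0) := by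
      apply summable_of_ne_finset_zero (s := {0})
      intro k hk
      simp at hk
      simp [hk]
    have htsum : ∑' k : ℤ, (c k - m k) * a k
        = (∑' k : ℤ, c k * Complex.exp (-(Complex.I * (k : ℂ) * (ω : ℂ) * (τ₀ : ℂ))) * a k)
          + (-m 0) := by
      calc ∑' k : ℤ, (c k - m k) * a k
          = ∑' k : ℤ, (c k * Complex.exp (-(Complex.I * (k : ℂ) * (ω : ℂ) * (τ₀ : ℂ))) * a k
            + (if k = 0 then -m 0 else 0)) := tsum_congr hterm
        _ = _ := by
            rw [Summable.tsum_add hsumg hite, tsum_ite_eq]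
    have hdiff : ∑' k : ℤ, c k * a k - ∑' k : ℤ, m k * a k
        = ∑' k : ℤ, (c k - m k) * a k := by
      rw [← Summable.tsum_sub hsumca hsumma]
      exact tsum_congr (fun k => by ring)
    -- put everything together
    have hRHS : ∑' k : ℤ, c k *
        Complex.exp (Complex.I * (k : ℂ) * (ω : ℂ) * ((τ₀ / τs : ℝ) : ℂ) * ((l - τs : ℝ) : ℂ))
        = ∑' k : ℤ, c k * Complex.exp (-(Complex.I * (k : ℂ) * (ω : ℂ) * (τ₀ : ℂ))) * a k := by
      refine tsum_congr (fun k => ?_)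
      rw [hshift k, ha]
      ring
    rw [hRHS]
    have hlin : m 0 / (τs : ℂ) * ((l - τs : ℝ) : ℂ)
        = m 0 / (τs : ℂ) * (l : ℂ) - m 0 := by
      have hτsC : (τs : ℂ) ≠ 0 := Complex.ofReal_ne_zero.mpr hτs'
      push_cast
      field_simp
    rw [hlin]
    have : ∑' k : ℤ, c k * a k
        - ∑' k : ℤ, m k * a k
        = (∑' k : ℤ, c k * Complex.exp (-(Complex.I * (k : ℂ) * (ω : ℂ) * (τ₀ : ℂ))) * a k) - m 0 := by
      rw [hdiff, htsum]; ring
    rw [ha] at this ⊢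
    linear_combination this
end

section
/- Let ω, τ₀ ∈ ℝ with sin(ωτ₀/2) ≠ 0, and define h₁: ℝ → ℝ by h₁(λ) := (cos(ωτ₀/2) − cos(ωλ + ωτ₀/2)) / (2 sin(ωτ₀/2)). Then h₁(0) = 0 and h₁(λ) − h₁(λ − τ₀) = sin(ωλ) for every λ ∈ ℝ. -/
/-- The closed-form first-order correction
h₁(λ) = (cos(ωτ₀/2) − cos(ωλ + ωτ₀/2))/(2 sin(ωτ₀/2)) satisfies h₁(0) = 0 and
the first-order functional equation h₁(λ) − h₁(λ − τ₀) = sin(ωλ) for all λ. -/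
theorem sinusoidal_first_order_functional_equation
    (ω τ₀ : ℝ) (hs : Real.sin (ω * τ₀ / 2) ≠ 0)
    (h₁ : ℝ → ℝ)
    (hh₁ : ∀ l : ℝ, h₁ l =
      (Real.cos (ω * τ₀ / 2) - Real.cos (ω * l + ω * τ₀ / 2)) / (2 * Real.sin (ω * τ₀ / 2))) :
    h₁ 0 = 0 ∧ ∀ l : ℝ, h₁ l - h₁ (l - τ₀) = Real.sin (ω * l) := by
  constructor
  · rw [hh₁]; simp
  · intro l
    rw [hh₁, hh₁]
    have e1 : ω * (l - τ₀) + ω * τ₀ / 2 = ω * l - ω * τ₀ / 2 := by ring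
    rw [e1, Real.cos_sub, Real.cos_add]
    field_simp
    ring
end

section
/- Let ω, τ₀ > 0 with sin(ωτ₀/2) ≠ 0, let ε ≥ 0, let τ(t) := τ₀ + ε sin(ωt), let h₁(λ) := (cos(ωτ₀/2) − cos(ωλ + ωτ₀/2)) / (2 sin(ωτ₀/2)), and let h_ε(λ) := λ + ε h₁(λ). Then h_ε(0) = 0 and for every λ ∈ ℝ the residual of the Abel equation satisfies |h_ε(λ) − τ(h_ε(λ)) − h_ε(λ − τ₀)| ≤ ε² ω / |sin(ωτ₀/2)|. -/
/-- For the sinusoidal delay τ(t) = τ₀ + ε sin(ωt) and the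
first-order approximate time-transformation h_ε(λ) = λ + ε h₁(λ), where
h₁(λ) = (cos(ωτ₀/2) − cos(ωλ + ωτ₀/2))/(2 sin(ωτ₀/2)), one has h_ε(0) = 0 and
the Abel-equation residual satisfies
|h_ε(λ) − τ(h_ε(λ)) − h_ε(λ − τ₀)| ≤ ε²ω/|sin(ωτ₀/2)| for every λ ∈ ℝ. -/
theorem sinusoidal_first_order_residual_bound
    (ω τ₀ : ℝ) (hω : 0 < ω) (hτ₀ : 0 < τ₀)
    (hs : Real.sin (ω * τ₀ / 2) ≠ 0)
    (ε : ℝ) (hε : 0 ≤ ε)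
    (τ : ℝ → ℝ) (hτ : ∀ t : ℝ, τ t = τ₀ + ε * Real.sin (ω * t))
    (h₁ : ℝ → ℝ)
    (hh₁ : ∀ l : ℝ, h₁ l =
      (Real.cos (ω * τ₀ / 2) - Real.cos (ω * l + ω * τ₀ / 2)) / (2 * Real.sin (ω * τ₀ / 2)))
    (he : ℝ → ℝ) (hhe : ∀ l : ℝ, he l = l + ε * h₁ l) :
    he 0 = 0 ∧
      ∀ l : ℝ, |he l - τ (he l) - he (l - τ₀)| ≤ ε ^ 2 * ω / |Real.sin (ω * τ₀ / 2)| := by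
  set s := Real.sin (ω * τ₀ / 2) with hsdef
  have hsabs : 0 < |s| := abs_pos.mpr hs
  constructor
  · rw [hhe, hh₁]
    simp
  · intro l
    -- |h₁ l| ≤ 1 / |s|
    have hbound : ∀ x : ℝ, |h₁ x| ≤ 1 / |s| := by
      intro x
      rw [hh₁, abs_div]
      rw [div_le_div_iff₀ (by positivity) hsabs]
      have h2 : |Real.cos (ω * τ₀ / 2) - Real.cos (ω * x + ω * τ₀ / 2)| ≤ 2 := by
        calc |Real.cos (ω * τ₀ / 2) - Real.cos (ω * x + ω * τ₀ / 2)|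
            ≤ |Real.cos (ω * τ₀ / 2)| + |Real.cos (ω * x + ω * τ₀ / 2)| := abs_sub _ _
          _ ≤ 1 + 1 := add_le_add (Real.abs_cos_le_one _) (Real.abs_cos_le_one _)
          _ = 2 := by norm_num
      have : |2 * s| = 2 * |s| := by rw [abs_mul]; norm_num
      rw [this]
      calc |Real.cos (ω * τ₀ / 2) - Real.cos (ω * x + ω * τ₀ / 2)| * |s|
          ≤ 2 * |s| := mul_le_mul_of_nonneg_right h2 (abs_nonneg _)
        _ = 1 * (2 * |s|) := by ring
    -- key identity: h₁ l - h₁ (l - τ₀) = sin (ω l)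
    have key : h₁ l - h₁ (l - τ₀) = Real.sin (ω * l) := by
      rw [hh₁, hh₁]
      have e1 : ω * (l - τ₀) + ω * τ₀ / 2 = ω * l - ω * τ₀ / 2 := by ring
      rw [e1]
      have e2 : Real.cos (ω * l - ω * τ₀ / 2) - Real.cos (ω * l + ω * τ₀ / 2)
          = 2 * Real.sin (ω * l) * s := by
        rw [Real.cos_sub, Real.cos_add, hsdef]; ring
      rw [div_sub_div_same]
      have e3 : Real.cos (ω * τ₀ / 2) - Real.cos (ω * l + ω * τ₀ / 2) -
          (Real.cos (ω * τ₀ / 2) - Real.cos (ω * l - ω * τ₀ / 2))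
          = 2 * Real.sin (ω * l) * s := by linarith [e2]
      rw [e3]
      field_simp
    -- residual rewriting
    have hres : he l - τ (he l) - he (l - τ₀)
        = ε * (Real.sin (ω * l) - Real.sin (ω * he l)) := by
      rw [hτ]
      nth_rewrite 1 [hhe]
      nth_rewrite 2 [hhe]
      rw [← key]; ring
    rw [hres, abs_mul, abs_of_nonneg hε]
    have hsin : |Real.sin (ω * l) - Real.sin (ω * he l)| ≤ |ω * l - ω * he l| := by
      set a := ω * l; set b := ω * he l
      rw [Real.sin_sub_sin, abs_mul, abs_mul]
      have h1 : |Real.sin ((a - b) / 2)| ≤ |(a - b) / 2| := Real.abs_sin_le_abs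
      have h2 : |Real.cos ((a + b) / 2)| ≤ 1 := Real.abs_cos_le_one _
      have h3 : |(a - b) / 2| = |a - b| / 2 := by rw [abs_div]; norm_num
      have h4 : (|2| : ℝ) = 2 := by norm_num
      rw [h4]
      nlinarith [abs_nonneg (Real.sin ((a - b) / 2)), abs_nonneg (a - b),
        abs_nonneg (Real.cos ((a + b) / 2))]
    have hdiff : |ω * l - ω * he l| = ω * (ε * |h₁ l|) := by
      rw [hhe]
      have : ω * l - ω * (l + ε * h₁ l) = -(ω * ε * h₁ l) := by ring
      rw [this, abs_neg, abs_mul, abs_mul, abs_of_pos hω, abs_of_nonneg hε]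
      ring
    calc ε * |Real.sin (ω * l) - Real.sin (ω * he l)|
        ≤ ε * (ω * (ε * |h₁ l|)) := by
          refine mul_le_mul_of_nonneg_left ?_ hε
          rw [← hdiff]; exact hsin
      _ ≤ ε * (ω * (ε * (1 / |s|))) := by
          have := hbound l
          have h1 : ε * |h₁ l| ≤ ε * (1 / |s|) := mul_le_mul_of_nonneg_left this hε
          have h2 : ω * (ε * |h₁ l|) ≤ ω * (ε * (1 / |s|)) :=
            mul_le_mul_of_nonneg_left h1 hω.le
          exact mul_le_mul_of_nonneg_left h2 hε
      _ = ε ^ 2 * ω / |s| := by field_simp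
end

section
/- Let ω, τ₀ ∈ ℝ with sin(ωτ₀/2) ≠ 0 and sin(ωτ₀) ≠ 0. Define h₁(λ) := (cos(ωτ₀/2) − cos(ωλ + ωτ₀/2)) / (2 sin(ωτ₀/2)) and h₂(λ) := −(ω cot(ωτ₀/2)/(4τ₀)) λ + ω (sin(3ωτ₀/2) − sin(2ωλ + 3ωτ₀/2)) / (8 sin(ωτ₀/2) sin(ωτ₀)) + ω cot(ωτ₀/2) (sin(ωλ + ωτ₀/2) − sin(ωτ₀/2)) / (4 sin(ωτ₀/2)). Then h₂(0) = 0 and h₂(λ) − h₂(λ − τ₀) = ω cos(ωλ) h₁(λ) for every λ ∈ ℝ. -/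
/-- The closed-form second-order correction h₂ for the sinusoidal
delay (with τ* = τ₀) satisfies h₂(0) = 0 and the second-order functional
equation h₂(λ) − h₂(λ − τ₀) = ω cos(ωλ) h₁(λ) for all λ ∈ ℝ, where
cot(x) = cos(x)/sin(x). -/
theorem sinusoidal_second_order_functional_equation
    (ω τ₀ : ℝ) (hs1 : Real.sin (ω * τ₀ / 2) ≠ 0) (hs2 : Real.sin (ω * τ₀) ≠ 0)
    (h₁ h₂ : ℝ → ℝ)
    (hh₁ : ∀ l : ℝ, h₁ l =
      (Real.cos (ω * τ₀ / 2) - Real.cos (ω * l + ω * τ₀ / 2)) / (2 * Real.sin (ω * τ₀ / 2)))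
    (hh₂ : ∀ l : ℝ, h₂ l =
      -(ω * (Real.cos (ω * τ₀ / 2) / Real.sin (ω * τ₀ / 2)) / (4 * τ₀)) * l
      + ω * (Real.sin (3 * ω * τ₀ / 2) - Real.sin (2 * ω * l + 3 * ω * τ₀ / 2)) /
          (8 * Real.sin (ω * τ₀ / 2) * Real.sin (ω * τ₀))
      + ω * (Real.cos (ω * τ₀ / 2) / Real.sin (ω * τ₀ / 2)) *
          (Real.sin (ω * l + ω * τ₀ / 2) - Real.sin (ω * τ₀ / 2)) /
          (4 * Real.sin (ω * τ₀ / 2))) :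
    h₂ 0 = 0 ∧ ∀ l : ℝ, h₂ l - h₂ (l - τ₀) = ω * Real.cos (ω * l) * h₁ l := by
  have hτ : τ₀ ≠ 0 := by
    intro h; apply hs2; simp [h]
  constructor
  · rw [hh₂]
    norm_num
  · intro l
    rw [hh₁, hh₂, hh₂]
    have hsin2 : Real.sin (ω * τ₀) = 2 * Real.sin (ω * τ₀ / 2) * Real.cos (ω * τ₀ / 2) := by
      have := Real.sin_two_mul (ω * τ₀ / 2)
      rw [show 2 * (ω * τ₀ / 2) = ω * τ₀ by ring] at this
      exact this
    rw [hsin2]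
    rw [show (3:ℝ) * ω * τ₀ / 2 = ω * τ₀ / 2 + (ω * τ₀ / 2 + ω * τ₀ / 2) by ring]
    rw [show 2 * ω * l + (ω * τ₀ / 2 + (ω * τ₀ / 2 + ω * τ₀ / 2)) = (ω * l + ω * l) + (ω * τ₀ / 2 + (ω * τ₀ / 2 + ω * τ₀ / 2)) by ring]
    rw [show 2 * ω * (l - τ₀) + (ω * τ₀ / 2 + (ω * τ₀ / 2 + ω * τ₀ / 2)) = (ω * l + ω * l) - (ω * τ₀ / 2) by ring]
    rw [show ω * (l - τ₀) + ω * τ₀ / 2 = ω * l - ω * τ₀ / 2 by ring]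
    simp only [Real.sin_add, Real.cos_add, Real.sin_sub, Real.cos_sub]
    have pb := Real.sin_sq_add_cos_sq (ω * τ₀ / 2)
    have pa := Real.sin_sq_add_cos_sq (ω * l)
    have hc : Real.cos (ω * τ₀ / 2) ≠ 0 := by
      intro h; apply hs2
      rw [show ω * τ₀ = 2 * (ω * τ₀ / 2) by ring, Real.sin_two_mul, h]; ring
    field_simp
    linear_combination ((-128 : ℝ)*(Real.sin (ω * τ₀ / 2))*(Real.cos (ω * τ₀ / 2))*(Real.cos (ω * τ₀ / 2))*(τ₀)*(ω) + (128 : ℝ)*(Real.sin (ω * τ₀ / 2))*(Real.cos (ω * τ₀ / 2))*(Real.cos (ω * τ₀ / 2))*(Real.cos (ω * τ₀ / 2))*(Real.cos (ω * τ₀ / 2))*(τ₀)*(ω) + (-128 : ℝ)*(Real.sin (ω * τ₀ / 2))*(Real.sin (ω * τ₀ / 2))*(Real.sin (ω * τ₀ / 2))*(Real.cos (ω * τ₀ / 2))*(Real.cos (ω * τ₀ / 2))*(τ₀)*(ω) + (128 : ℝ)*(Real.cos (ω * l))*(Real.cos (ω * l))*(Real.sin (ω * τ₀ / 2))*(Real.cos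 (ω * τ₀ / 2))*(Real.cos (ω * τ₀ / 2))*(τ₀)*(ω) + (-128 : ℝ)*(Real.cos (ω * l))*(Real.cos (ω * l))*(Real.sin (ω * τ₀ / 2))*(Real.cos (ω * τ₀ / 2))*(Real.cos (ω * τ₀ / 2))*(Real.cos (ω * τ₀ / 2))*(Real.cos (ω * τ₀ / 2))*(τ₀)*(ω) + (128 : ℝ)*(Real.cos (ω * l))*(Real.cos (ω * l))*(Real.sin (ω * τ₀ / 2))*(Real.sin (ω * τ₀ / 2))*(Real.sin (ω * τ₀ / 2))*(Real.cos (ω * τ₀ / 2))*(Real.cos (ω * τ₀ / 2))*(τ₀)*(ω) + (32 : ℝ)*(Real.cos (ω * l))*(Real.cos (ω * l))*(Real.sin (ω * τ₀ / 2))*(Real.sin (ω * τ₀ / 2))*(Real.sin (ω * τ₀ / 2))*(Real.sin (ω * τ₀ / 2))*(Real.sin (ω * τ₀ / 2))*(τ₀)*(ω) + (-64 : ℝ)*(Real.sin (ω * l))*(Real.cos (ω * l))*(Real.sin (ω * τ₀ / 2))*(Real.sin (ω * τ₀ / 2))*(Real.sin (ω * τ₀ / 2))*(Real.sin (ω * τ₀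 / 2))*(Real.cos (ω * τ₀ / 2))*(τ₀)*(ω) + (128 : ℝ)*(Real.sin (ω * l))*(Real.sin (ω * l))*(Real.sin (ω * τ₀ / 2))*(Real.cos (ω * τ₀ / 2))*(Real.cos (ω * τ₀ / 2))*(τ₀)*(ω) + (-128 : ℝ)*(Real.sin (ω * l))*(Real.sin (ω * l))*(Real.sin (ω * τ₀ / 2))*(Real.cos (ω * τ₀ / 2))*(Real.cos (ω * τ₀ / 2))*(Real.cos (ω * τ₀ / 2))*(Real.cos (ω * τ₀ / 2))*(τ₀)*(ω) + (128 : ℝ)*(Real.sin (ω * l))*(Real.sin (ω * l))*(Real.sin (ω * τ₀ / 2))*(Real.sin (ω * τ₀ / 2))*(Real.sin (ω * τ₀ / 2))*(Real.cos (ω * τ₀ / 2))*(Real.cos (ω * τ₀ / 2))*(τ₀)*(ω) + (-32 : ℝ)*(Real.sin (ω * l))*(Real.sin (ω * l))*(Real.sin (ω * τ₀ / 2))*(Real.sin (ω * τ₀ / 2))*(Real.sin (ω * τ₀ / 2))*(Real.sin (ω * τ₀ / 2))*(Real.sin (ω * τ₀ / 2))*(τ₀)*(ω)) * pb + ((128 :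 ℝ)*(Real.sin (ω * τ₀ / 2))*(Real.cos (ω * τ₀ / 2))*(Real.cos (ω * τ₀ / 2))*(τ₀)*(ω) + (-256 : ℝ)*(Real.sin (ω * τ₀ / 2))*(Real.cos (ω * τ₀ / 2))*(Real.cos (ω * τ₀ / 2))*(Real.cos (ω * τ₀ / 2))*(Real.cos (ω * τ₀ / 2))*(τ₀)*(ω) + (128 : ℝ)*(Real.sin (ω * τ₀ / 2))*(Real.cos (ω * τ₀ / 2))*(Real.cos (ω * τ₀ / 2))*(Real.cos (ω * τ₀ / 2))*(Real.cos (ω * τ₀ / 2))*(Real.cos (ω * τ₀ / 2))*(Real.cos (ω * τ₀ / 2))*(τ₀)*(ω)) * pa + (ω * τ₀ * Real.sin (ω * l) * Real.cos (ω * l) * Real.cos (ω * τ₀ / 2) * (64 * Real.sin (ω * τ₀ / 2)^4 - 8) + ω * τ₀ * Real.sin (ω * τ₀ / 2) * (4 * Real.sin (ω * l)^2 - 4 * Real.cos (ω * l)^2) * (8 * Real.sin (ω * τ₀ / 2)^4 - 1)) * pb + (ω * τ₀ * Real.sin (ω * τ₀ / 2) * (16 * Real.cos (ω * τ₀ / 2)^2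 - 128 * Real.cos (ω * τ₀ / 2)^2 * Real.sin (ω * τ₀ / 2)^4)) * pa
end
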